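/- arXiv:1001.0030 — 2 statements merged into one kernel-verified Lean document; each statement's English description precedes it below -/
import Mathlib

section
/- Let G be a group, c ∈ G with c^h = 1, and m ≥ 1. Define φ on (m+1)-tuples (w₀; w₁, …, w_m) with w₀w₁⋯w_m = c by φ(w₀; w₁, …, w_m) = ((c w_m c⁻¹) w₀ (c w_m c⁻¹)⁻¹; c w_m c⁻¹, w₁, w₂, …, w_{m−1}). Then φ is a well-defined map of this set to itself (the product of the components of the image again equals c), and φ^{mh} is the identity on this set. -/
/-- The map φ of Armstrong:
φ(w₀; w₁, …, w_m) = ((c w_m c⁻¹) w₀ (c w_m c⁻¹)⁻¹; c w_m c⁻¹, w₁, …, w_{m−1}). -/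
def phiMap {G : Type*} [Group G] (c : G) (m : ℕ) (w : Fin (m + 1) → G) : Fin (m + 1) → G :=
  fun i =>
    if i = 0 then (c * w (Fin.last m) * c⁻¹) * w 0 * (c * w (Fin.last m) * c⁻¹)⁻¹
    else if i = 1 then c * w (Fin.last m) * c⁻¹
    else w (i - 1)

section Aux

variable {G : Type*} [Group G]

/-- The tail of a tuple. -/
def tailF {n : ℕ} (w : Fin (n + 2) → G) : Fin (n + 1) → G := fun i => w i.succ

/-- The twisted rotation on tails. -/
def Tmap (c : G) {n : ℕ} (v : Fin (n + 1) → G) : Fin (n + 1) → G :=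
  fun i => if i = 0 then c * v (Fin.last n) * c⁻¹ else v (i - 1)

lemma succ_sub_one {n : ℕ} (i : Fin (n + 1)) (hi : i ≠ 0) :
    i.succ - 1 = (i - 1).succ := by
  apply Fin.ext
  have h1 : i.succ ≠ 0 := Fin.succ_ne_zero i
  have h2 : (i : ℕ) ≠ 0 := fun h => hi (Fin.ext h)
  rw [Fin.coe_sub_one, if_neg h1]
  simp only [Fin.val_succ, Fin.coe_sub_one, if_neg hi]
  omega

lemma tail_phi (c : G) {n : ℕ} (w : Fin (n + 2) → G) :
    tailF (phiMap c (n + 1) w) = Tmap c (tailF w) := by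
  funext i
  rcases eq_or_ne i 0 with rfl | hi
  · show phiMap c (n + 1) w (0 : Fin (n + 1)).succ = _
    rw [Fin.succ_zero_eq_one, Tmap, if_pos rfl, phiMap]
    rw [if_neg (show (1 : Fin (n + 2)) ≠ 0 by simp), if_pos rfl]
    show c * w (Fin.last (n + 1)) * c⁻¹ = c * w (Fin.last n).succ * c⁻¹
    rw [Fin.succ_last]
  · have h1 : i.succ ≠ 0 := Fin.succ_ne_zero i
    have h2 : i.succ ≠ 1 := by
      intro h
      exact hi (Fin.succ_injective _ (by rwa [Fin.succ_zero_eq_one]))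
    show phiMap c (n + 1) w i.succ = _
    rw [Tmap, if_neg hi, phiMap]
    show (if i.succ = 0 then _ else if i.succ = 1 then _ else w (i.succ - 1)) = tailF w (i - 1)
    rw [if_neg h1, if_neg h2, succ_sub_one i hi]
    rfl

open Fin.NatCast Fin.CommRing in
lemma Tmap_iterate (c : G) {n : ℕ} : ∀ k, k ≤ n + 1 → ∀ (v : Fin (n + 1) → G) (i : Fin (n + 1)),
    (Tmap c)^[k] v i =
      if (i : ℕ) < k then c * v (i - (k : Fin (n + 1))) * c⁻¹ else v (i - (k : Fin (n + 1))) := by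
  intro k
  induction k with
  | zero => intro _ v i; simp
  | succ k ih =>
    intro hk v i
    rw [Function.iterate_succ_apply' (Tmap c)]
    rcases eq_or_ne i 0 with rfl | hi
    · rw [Tmap, if_pos rfl, ih (by omega) v (Fin.last n)]
      have hlast : ((Fin.last n : Fin (n + 1)) : ℕ) = n := rfl
      rw [if_neg (by omega), if_pos (by simp)]
      have hl : (Fin.last n : Fin (n + 1)) = 0 - 1 := by
        apply Fin.ext; rw [Fin.coe_sub_one, if_pos rfl]; rfl
      congr 2
      rw [hl]
      push_cast
      ring
    · rw [Tmap, if_neg hi, ih (by omega) v (i - 1)]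
      have hv : ((i - 1 : Fin (n + 1)) : ℕ) = (i : ℕ) - 1 := by
        rw [Fin.coe_sub_one, if_neg hi]
      have hpos : (i : ℕ) ≠ 0 := fun h => hi (Fin.ext h)
      have harith : i - 1 - (k : Fin (n + 1)) = i - ((k + 1 : ℕ) : Fin (n + 1)) := by
        push_cast; ring
      rw [harith]
      by_cases hlt : (i : ℕ) < k + 1
      · rw [if_pos (by omega), if_pos hlt]
      · rw [if_neg (by omega), if_neg hlt]

open Fin.NatCast in
lemma Tmap_full (c : G) {n : ℕ} (v : Fin (n + 1) → G) :
    (Tmap c)^[n + 1] v = fun i => c * v i * c⁻¹ := by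
  funext i
  rw [Tmap_iterate c (n + 1) le_rfl v i, if_pos i.isLt]
  congr 2
  rw [Fin.natCast_self, sub_zero]

lemma Tmap_iterate_mul (c : G) {n : ℕ} (h : ℕ) : ∀ v : Fin (n + 1) → G,
    (Tmap c)^[(n + 1) * h] v = fun i => c ^ h * v i * (c ^ h)⁻¹ := by
  induction h with
  | zero => intro v; simp
  | succ h ih =>
    intro v
    have hmn : (n + 1) * (h + 1) = (n + 1) + (n + 1) * h := by ring
    rw [hmn, Function.iterate_add_apply, ih v, Tmap_full]
    funext i
    simp only [pow_succ]
    group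

/-- Product decomposition of a tuple into head, middle, and last. -/
lemma prod_decomp {n : ℕ} (u : Fin (n + 2) → G) :
    (List.ofFn u).prod =
      u 0 * ((List.ofFn fun i : Fin n => u i.succ.castSucc).prod * u (Fin.last (n + 1))) := by
  rw [List.ofFn_succ, List.ofFn_succ', List.prod_cons, List.concat_eq_append, List.prod_append]
  simp [Fin.succ_last, mul_assoc]

/-- Product decomposition of a tuple into first two entries and the rest. -/
lemma prod_decomp2 {n : ℕ} (u : Fin (n + 2) → G) :
    (List.ofFn u).prod = u 0 * (u 1 * (List.ofFn fun i : Fin n => u i.succ.succ).prod) := by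
  rw [List.ofFn_succ, List.prod_cons, List.ofFn_succ, List.prod_cons, Fin.succ_zero_eq_one]

lemma prod_head {n : ℕ} (u : Fin (n + 2) → G) :
    (List.ofFn u).prod = u 0 * (List.ofFn (tailF u)).prod := by
  rw [List.ofFn_succ, List.prod_cons]; rfl

lemma phi_two {n : ℕ} (c : G) (w : Fin (n + 2) → G) (i : Fin n) :
    phiMap c (n + 1) w i.succ.succ = w i.succ.castSucc := by
  have h0 : (i.succ.succ : Fin (n + 2)) ≠ 0 := Fin.succ_ne_zero _
  have h1 : (i.succ.succ : Fin (n + 2)) ≠ 1 := by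
    intro h
    have := congrArg Fin.val h
    simp [Fin.val_succ] at this
  rw [phiMap]
  show (if i.succ.succ = 0 then _ else if i.succ.succ = 1 then _ else w (i.succ.succ - 1)) = _
  rw [if_neg h0, if_neg h1]
  congr 1
  apply Fin.ext
  rw [Fin.coe_sub_one, if_neg h0]
  simp [Fin.val_succ]

lemma phi_prod {n : ℕ} (c : G) (w : Fin (n + 2) → G)
    (hw : (List.ofFn w).prod = c) : (List.ofFn (phiMap c (n + 1) w)).prod = c := by
  set L := w (Fin.last (n + 1)) with hL
  set P := (List.ofFn fun i : Fin n => w i.succ.castSucc).prod with hPdef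
  have hw' : w 0 * (P * L) = c := by rw [← prod_decomp]; exact hw
  have hP : P = (w 0)⁻¹ * c * L⁻¹ := by rw [← hw']; group
  have h0 : phiMap c (n + 1) w 0 = (c * L * c⁻¹) * w 0 * (c * L * c⁻¹)⁻¹ := by
    rw [phiMap, if_pos rfl]
  have h1 : phiMap c (n + 1) w 1 = c * L * c⁻¹ := by
    rw [phiMap]
    show (if (1 : Fin (n + 2)) = 0 then _ else if (1 : Fin (n + 2)) = 1 then c * L * c⁻¹ else _) = _
    rw [if_neg (show (1 : Fin (n + 2)) ≠ 0 by simp), if_pos rfl]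
  have hmid : (List.ofFn fun i : Fin n => phiMap c (n + 1) w i.succ.succ).prod = P := by
    rw [hPdef]
    congr 1
    congr 1
    funext i
    exact phi_two c w i
  rw [prod_decomp2, h0, h1, hmid, hP]
  group

end Aux

theorem phiMap_preserves_and_order {G : Type*} [Group G] (c : G) (h m : ℕ)
    (hc : c ^ h = 1) (hm : 1 ≤ m) :
    (∀ w : Fin (m + 1) → G, (List.ofFn w).prod = c → (List.ofFn (phiMap c m w)).prod = c) ∧
    (∀ w : Fin (m + 1) → G, (List.ofFn w).prod = c → (phiMap c m)^[m * h] w = w) := by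
  obtain ⟨n, rfl⟩ : ∃ n, m = n + 1 := ⟨m - 1, by omega⟩
  refine ⟨fun w hw => phi_prod c w hw, fun w hw => ?_⟩
  have hprod : ∀ j, (List.ofFn ((phiMap c (n + 1))^[j] w)).prod = c := by
    intro j
    induction j with
    | zero => exact hw
    | succ j ih => rw [Function.iterate_succ_apply']; exact phi_prod c _ ih
  have htail : ∀ j, tailF ((phiMap c (n + 1))^[j] w) = (Tmap c)^[j] (tailF w) := by
    intro j
    induction j with
    | zero => rfl
    | succ j ih =>
      rw [Function.iterate_succ_apply', Function.iterate_succ_apply', tail_phi, ih]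
  have hTfix : (Tmap c)^[(n + 1) * h] (tailF w) = tailF w := by
    rw [Tmap_iterate_mul c h (tailF w), hc]
    simp
  have hteq : tailF ((phiMap c (n + 1))^[(n + 1) * h] w) = tailF w := by
    rw [htail, hTfix]
  funext i
  refine Fin.cases ?_ (fun j => ?_) i
  · have h1 := prod_head ((phiMap c (n + 1))^[(n + 1) * h] w)
    have h2 := prod_head w
    rw [hprod ((n + 1) * h), hteq] at h1
    rw [hw] at h2
    exact mul_right_cancel (h1.symm.trans h2)
  · exact congrFun hteq j
end

section
/- For every even nonnegative integer m, one has 1 + 713·(m/2) + 5965·C(m/2, 2) + 11925·C(m/2, 3) + 6750·C(m/2, 4) = (5m+4)(3m+2)(5m+2)(15m+4)/64. -/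
lemma c2 (k : ℕ) : ((k.choose 2 : ℕ) : ℚ) = k*(k-1)/2 := by
  induction k with
  | zero => norm_num
  | succ n ih =>
    rw [Nat.choose_succ_succ' n 1, Nat.choose_one_right]
    push_cast
    rw [ih]; ring

lemma c3 (k : ℕ) : ((k.choose 3 : ℕ) : ℚ) = k*(k-1)*(k-2)/6 := by
  induction k with
  | zero => norm_num
  | succ n ih =>
    rw [Nat.choose_succ_succ' n 2]
    push_cast
    rw [ih, c2]; ring

lemma c4 (k : ℕ) : ((k.choose 4 : ℕ) : ℚ) = k*(k-1)*(k-2)*(k-3)/24 := by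
  induction k with
  | zero => norm_num
  | succ n ih =>
    rw [Nat.choose_succ_succ' n 3]
    push_cast
    rw [ih, c3]; ring

theorem count_E8_half_identity (m : ℕ) (hm : 2 ∣ m) :
    (1 : ℚ) + 713 * ((m / 2 : ℕ) : ℚ) + 5965 * (((m / 2).choose 2 : ℕ) : ℚ) +
        11925 * (((m / 2).choose 3 : ℕ) : ℚ) + 6750 * (((m / 2).choose 4 : ℕ) : ℚ) =
      (((5 * m + 4) * (3 * m + 2) * (5 * m + 2) * (15 * m + 4) : ℕ) : ℚ) / 64 := by
  obtain ⟨k, rfl⟩ := hm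
  have hk : 2 * k / 2 = k := by omega
  rw [hk, c2, c3, c4]
  push_cast
  ring
end
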